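/- arXiv:2303.16448 — 2 statements merged into one kernel-verified Lean document; each statement's English description precedes it below -/
import Mathlib

section
/- Let a < b. Let Q₀ : ℝ → ℝ be continuous on [a,b], Q₁, Q₂ : ℝ² → ℝ be continuous on [a,b]², and B₁, B₂, B₃ : ℝ³ → ℝ be continuous on [a,b]³, and let w : ℝ² → ℝ be continuous on [a,b]². Define (ℬw)(s) = ∫_a^s ∫_a^θ B₁(s,θ,η)w(θ,η) dη dθ + ∫_s^b ∫_a^s B₂(s,θ,η)w(θ,η) dη dθ + ∫_s^b ∫_s^θ B₃(s,θ,η)w(θ,η) dη dθ, and for a continuous f : ℝ → ℝ define (𝒬f)(s) = Q₀(s)f(s) + ∫_a^s Q₁(s,ζ)f(ζ)dζ + ∫_s^b Q₂(s,ζ)f(ζ)dζ. Set R_{ij}(s,ζ,θ,η) = Q_i(s,ζ)B_j(ζ,θ,η) for i ∈ {1,2}, j ∈ {1,2,3}, and define G₁(s,θ,η) = Q₀(s)B₁(s,θ,η) + ∫_a^η R₁₃(s,ζ,θ,η)dζ + ∫_η^θ R₁₂(s,ζ,θ,η)dζ + ∫_θ^s R₁₁(s,ζ,θ,η)dζ +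 ∫_s^b R₂₁(s,ζ,θ,η)dζ; G₂(s,θ,η) = Q₀(s)B₂(s,θ,η) + ∫_a^η R₁₃(s,ζ,θ,η)dζ + ∫_η^s R₁₂(s,ζ,θ,η)dζ + ∫_s^θ R₂₂(s,ζ,θ,η)dζ + ∫_θ^b R₂₁(s,ζ,θ,η)dζ; G₃(s,θ,η) = Q₀(s)B₃(s,θ,η) + ∫_a^s R₁₃(s,ζ,θ,η)dζ + ∫_s^η R₂₃(s,ζ,θ,η)dζ + ∫_η^θ R₂₂(s,ζ,θ,η)dζ + ∫_θ^b R₂₁(s,ζ,θ,η)dζ. Then for every s ∈ [a,b], (𝒬(ℬw))(s) = ∫_a^s ∫_a^θ G₁(s,θ,η)w(θ,η) dη dθ + ∫_s^b ∫_a^s G₂(s,θ,η)w(θ,η) dη dθ + ∫_s^b ∫_s^θ G₃(s,θ,η)w(θ,η) dη dθ. -/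
open MeasureTheory

/-- Tensor-product partial integral operator with kernels `B₁, B₂, B₃` on `[a,b]`,
applied to a two-variable function `w`, evaluated at `s`. -/
noncomputable def tensorPI (a b : ℝ) (B₁ B₂ B₃ : ℝ → ℝ → ℝ → ℝ)
    (w : ℝ → ℝ → ℝ) (s : ℝ) : ℝ :=
  (∫ θ in a..s, ∫ η in a..θ, B₁ s θ η * w θ η)
    + (∫ θ in s..b, ∫ η in a..s, B₂ s θ η * w θ η)
    + (∫ θ in s..b, ∫ η in s..θ, B₃ s θ η * w θ η)

open intervalIntegral Set

@[fun_prop]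
theorem continuous_parametric_intervalIntegral_of_continuous₂
    {X : Type*} [TopologicalSpace X] {f : X → ℝ → ℝ}
    (hf : Continuous f.uncurry) {u v : X → ℝ} (hu : Continuous u) (hv : Continuous v) :
    Continuous fun x => ∫ t in u x..v x, f x t := by
  have h : ∀ x, ∫ t in u x..v x, f x t
      = (∫ t in (0:ℝ)..v x, f x t) - ∫ t in (0:ℝ)..u x, f x t := by
    intro x
    rw [integral_interval_sub_left ((hf.uncurry_left x).intervalIntegrable _ _)
      ((hf.uncurry_left x).intervalIntegrable _ _)]
  simp only [h]
  exact (continuous_parametric_intervalIntegral_of_continuous hf hv).sub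
    (continuous_parametric_intervalIntegral_of_continuous hf hu)

lemma rectSwap (f : ℝ → ℝ → ℝ) (hf : Continuous fun p : ℝ × ℝ => f p.1 p.2)
    {c d p q : ℝ} (hcd : c ≤ d) (hpq : p ≤ q) :
    ∫ x in c..d, ∫ y in p..q, f x y = ∫ y in p..q, ∫ x in c..d, f x y := by
  rw [integral_of_le hcd, integral_of_le hpq]
  simp only [integral_of_le hcd, integral_of_le hpq]
  apply integral_integral_swap
  rw [Measure.prod_restrict]
  exact ((hf.continuousOn.integrableOn_compact (isCompact_Icc.prod isCompact_Icc)).mono_set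
    (Set.prod_mono Set.Ioc_subset_Icc_self Set.Ioc_subset_Icc_self))

lemma triSwap (f : ℝ → ℝ → ℝ) (hf : Continuous fun p : ℝ × ℝ => f p.1 p.2)
    {c d : ℝ} (hcd : c ≤ d) :
    ∫ x in c..d, ∫ y in c..x, f x y = ∫ y in c..d, ∫ x in y..d, f x y := by
  have hS : MeasurableSet {p : ℝ × ℝ | p.2 ≤ p.1} :=
    (isClosed_le continuous_snd continuous_fst).measurableSet
  set g : ℝ × ℝ → ℝ := {p : ℝ × ℝ | p.2 ≤ p.1}.indicator (fun p => f p.1 p.2) with hg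
  have hint : Integrable (Function.uncurry fun x y => g (x, y))
      ((volume.restrict (Ioc c d)).prod (volume.restrict (Ioc c d))) := by
    rw [Measure.prod_restrict]
    refine Integrable.indicator ?_ hS
    exact (hf.continuousOn.integrableOn_compact (isCompact_Icc.prod isCompact_Icc)).mono_set
      (Set.prod_mono Set.Ioc_subset_Icc_self Set.Ioc_subset_Icc_self)
  have L : ∫ x in c..d, ∫ y in c..x, f x y
      = ∫ x in Ioc c d, ∫ y in Ioc c d, g (x, y) := by
    rw [integral_of_le hcd]
    refine setIntegral_congr_fun measurableSet_Ioc (fun x hx => ?_)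
    have h1 : ∫ y in c..x, f x y = ∫ y in Ioc c x, f x y := integral_of_le hx.1.le
    have h2 : ∫ y in Ioc c d, g (x, y)
        = ∫ y in Ioc c d, (Ioc c x).indicator (f x) y := by
      refine setIntegral_congr_fun measurableSet_Ioc (fun y hy => ?_)
      simp only [hg, Set.indicator_apply, Set.mem_setOf_eq, Set.mem_Ioc]
      by_cases h : y ≤ x
      · simp [h, hy.1]
      · simp [h]
    rw [h1, h2, setIntegral_indicator measurableSet_Ioc]
    congr 1
    rw [Set.Ioc_inter_Ioc, max_self, min_eq_right hx.2]
  have R : ∫ y in c..d, ∫ x in y..d, f x y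
      = ∫ y in Ioc c d, ∫ x in Ioc c d, g (x, y) := by
    rw [integral_of_le hcd]
    refine setIntegral_congr_fun measurableSet_Ioc (fun y hy => ?_)
    have h2 : ∫ x in Ioc c d, g (x, y)
        = ∫ x in Ioc c d, (Ici y).indicator (fun x => f x y) x := by
      refine setIntegral_congr_fun measurableSet_Ioc (fun x hx => ?_)
      simp [hg, Set.indicator_apply, Set.mem_setOf_eq]
    have h3 : Ioc c d ∩ Ici y = Icc y d := by
      ext z
      simp only [Set.mem_inter_iff, Set.mem_Ioc, Set.mem_Ici, Set.mem_Icc]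
      exact ⟨fun h => ⟨h.2, h.1.2⟩, fun h => ⟨⟨lt_of_lt_of_le hy.1 h.1, h.2⟩, h.1⟩⟩
    rw [h2, setIntegral_indicator measurableSet_Ici, h3, integral_Icc_eq_integral_Ioc,
      ← integral_of_le hy.2]
  rw [L, R]
  exact integral_integral_swap hint

lemma splitI (f : ℝ → ℝ) (hf : Continuous f) (c m d : ℝ) :
    ∫ x in c..d, f x = (∫ x in c..m, f x) + ∫ x in m..d, f x :=
  (integral_add_adjacent_intervals (hf.intervalIntegrable _ _)
    (hf.intervalIntegrable _ _)).symm

lemma iadd₂ (f₁ f₂ : ℝ → ℝ) (h₁ : Continuous f₁) (h₂ : Continuous f₂) (c d : ℝ) :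
    ∫ x in c..d, (f₁ x + f₂ x) = (∫ x in c..d, f₁ x) + ∫ x in c..d, f₂ x :=
  integral_add (h₁.intervalIntegrable _ _) (h₂.intervalIntegrable _ _)

lemma iadd₅ (f₁ f₂ f₃ f₄ f₅ : ℝ → ℝ) (h₁ : Continuous f₁) (h₂ : Continuous f₂)
    (h₃ : Continuous f₃) (h₄ : Continuous f₄) (h₅ : Continuous f₅) (c d : ℝ) :
    ∫ x in c..d, (f₁ x + f₂ x + f₃ x + f₄ x + f₅ x)
      = (∫ x in c..d, f₁ x) + (∫ x in c..d, f₂ x) + (∫ x in c..d, f₃ x)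
        + (∫ x in c..d, f₄ x) + ∫ x in c..d, f₅ x := by
  rw [iadd₂ _ f₅ (by fun_prop) h₅, iadd₂ _ f₄ (by fun_prop) h₄,
    iadd₂ _ f₃ (by fun_prop) h₃, iadd₂ f₁ f₂ h₁ h₂]

lemma iadd₆ (f₁ f₂ f₃ f₄ f₅ f₆ : ℝ → ℝ) (h₁ : Continuous f₁) (h₂ : Continuous f₂)
    (h₃ : Continuous f₃) (h₄ : Continuous f₄) (h₅ : Continuous f₅) (h₆ : Continuous f₆)
    (c d : ℝ) :
    ∫ x in c..d, (f₁ x + f₂ x + f₃ x + f₄ x + f₅ x + f₆ x)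
      = (∫ x in c..d, f₁ x) + (∫ x in c..d, f₂ x) + (∫ x in c..d, f₃ x)
        + (∫ x in c..d, f₄ x) + (∫ x in c..d, f₅ x) + ∫ x in c..d, f₆ x := by
  rw [iadd₂ _ f₆ (by fun_prop) h₆, iadd₅ f₁ f₂ f₃ f₄ f₅ h₁ h₂ h₃ h₄ h₅]
theorem key (a b : ℝ) (Q₀ : ℝ → ℝ) (Q₁ Q₂ : ℝ → ℝ → ℝ) (B₁ B₂ B₃ : ℝ → ℝ → ℝ → ℝ)
    (w : ℝ → ℝ → ℝ)
    (hQ₀ : Continuous Q₀)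
    (hQ₁ : Continuous (fun p : ℝ × ℝ => Q₁ p.1 p.2))
    (hQ₂ : Continuous (fun p : ℝ × ℝ => Q₂ p.1 p.2))
    (hB₁ : Continuous (fun p : ℝ × ℝ × ℝ => B₁ p.1 p.2.1 p.2.2))
    (hB₂ : Continuous (fun p : ℝ × ℝ × ℝ => B₂ p.1 p.2.1 p.2.2))
    (hB₃ : Continuous (fun p : ℝ × ℝ × ℝ => B₃ p.1 p.2.1 p.2.2))
    (hw : Continuous (fun p : ℝ × ℝ => w p.1 p.2))
    (s : ℝ) (has : a ≤ s) (hsb : s ≤ b) :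
    Q₀ s * tensorPI a b B₁ B₂ B₃ w s
      + (∫ ζ in a..s, Q₁ s ζ * tensorPI a b B₁ B₂ B₃ w ζ)
      + (∫ ζ in s..b, Q₂ s ζ * tensorPI a b B₁ B₂ B₃ w ζ)
    = tensorPI a b
        (fun s θ η => Q₀ s * B₁ s θ η
          + (∫ ζ in a..η, Q₁ s ζ * B₃ ζ θ η)
          + (∫ ζ in η..θ, Q₁ s ζ * B₂ ζ θ η)
          + (∫ ζ in θ..s, Q₁ s ζ * B₁ ζ θ η)
          + ∫ ζ in s..b, Q₂ s ζ * B₁ ζ θ η)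
        (fun s θ η => Q₀ s * B₂ s θ η
          + (∫ ζ in a..η, Q₁ s ζ * B₃ ζ θ η)
          + (∫ ζ in η..s, Q₁ s ζ * B₂ ζ θ η)
          + (∫ ζ in s..θ, Q₂ s ζ * B₂ ζ θ η)
          + ∫ ζ in θ..b, Q₂ s ζ * B₁ ζ θ η)
        (fun s θ η => Q₀ s * B₃ s θ η
          + (∫ ζ in a..s, Q₁ s ζ * B₃ ζ θ η)
          + (∫ ζ in s..η, Q₂ s ζ * B₃ ζ θ η)
          + (∫ ζ in η..θ, Q₂ s ζ * B₂ ζ θ η)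
          + ∫ ζ in θ..b, Q₂ s ζ * B₁ ζ θ η)
        w s := by
  -- pointwise splitting of the middle `Q₁` term
  have hsplit1 : ∀ ζ, Q₁ s ζ * tensorPI a b B₁ B₂ B₃ w ζ
      = (∫ θ in a..ζ, ∫ η in a..θ, Q₁ s ζ * B₁ ζ θ η * w θ η)
      + (∫ θ in ζ..s, ∫ η in a..ζ, Q₁ s ζ * B₂ ζ θ η * w θ η)
      + (∫ θ in s..b, ∫ η in a..ζ, Q₁ s ζ * B₂ ζ θ η * w θ η)
      + (∫ θ in ζ..s, ∫ η in ζ..θ, Q₁ s ζ * B₃ ζ θ η * w θ η)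
      + (∫ θ in s..b, ∫ η in ζ..s, Q₁ s ζ * B₃ ζ θ η * w θ η)
      + (∫ θ in s..b, ∫ η in s..θ, Q₁ s ζ * B₃ ζ θ η * w θ η) := by
    intro ζ
    have h2 : (∫ θ in ζ..b, ∫ η in a..ζ, B₂ ζ θ η * w θ η)
        = (∫ θ in ζ..s, ∫ η in a..ζ, B₂ ζ θ η * w θ η)
          + ∫ θ in s..b, ∫ η in a..ζ, B₂ ζ θ η * w θ η :=
      splitI _ (by fun_prop) _ _ _
    have h3 : (∫ θ in ζ..b, ∫ η in ζ..θ, B₃ ζ θ η * w θ η)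
        = (∫ θ in ζ..s, ∫ η in ζ..θ, B₃ ζ θ η * w θ η)
          + ∫ θ in s..b, ∫ η in ζ..θ, B₃ ζ θ η * w θ η :=
      splitI _ (by fun_prop) _ _ _
    have h3b : (∫ θ in s..b, ∫ η in ζ..θ, B₃ ζ θ η * w θ η)
        = (∫ θ in s..b, ∫ η in ζ..s, B₃ ζ θ η * w θ η)
          + ∫ θ in s..b, ∫ η in s..θ, B₃ ζ θ η * w θ η :=
      calc (∫ θ in s..b, ∫ η in ζ..θ, B₃ ζ θ η * w θ η)
          = ∫ θ in s..b, ((∫ η in ζ..s, B₃ ζ θ η * w θ η)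
              + ∫ η in s..θ, B₃ ζ θ η * w θ η) :=
            intervalIntegral.integral_congr fun θ _ => splitI _ (by fun_prop) _ _ _
        _ = _ := iadd₂ _ _ (by fun_prop) (by fun_prop) _ _
    simp only [tensorPI]
    rw [h2, h3, h3b]
    simp only [mul_add, ← intervalIntegral.integral_const_mul, ← mul_assoc]
    ring
  -- pointwise splitting of the `Q₂` term
  have hsplit2 : ∀ ζ, Q₂ s ζ * tensorPI a b B₁ B₂ B₃ w ζ
      = (∫ θ in a..s, ∫ η in a..θ, Q₂ s ζ * B₁ ζ θ η * w θ η)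
      + (∫ θ in s..ζ, ∫ η in a..s, Q₂ s ζ * B₁ ζ θ η * w θ η)
      + (∫ θ in s..ζ, ∫ η in s..θ, Q₂ s ζ * B₁ ζ θ η * w θ η)
      + (∫ θ in ζ..b, ∫ η in a..s, Q₂ s ζ * B₂ ζ θ η * w θ η)
      + (∫ θ in ζ..b, ∫ η in s..ζ, Q₂ s ζ * B₂ ζ θ η * w θ η)
      + (∫ θ in ζ..b, ∫ η in ζ..θ, Q₂ s ζ * B₃ ζ θ η * w θ η) := by
    intro ζ
    have h1 : (∫ θ in a..ζ, ∫ η in a..θ, B₁ ζ θ η * w θ η)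
        = (∫ θ in a..s, ∫ η in a..θ, B₁ ζ θ η * w θ η)
          + ∫ θ in s..ζ, ∫ η in a..θ, B₁ ζ θ η * w θ η :=
      splitI _ (by fun_prop) _ _ _
    have h1b : (∫ θ in s..ζ, ∫ η in a..θ, B₁ ζ θ η * w θ η)
        = (∫ θ in s..ζ, ∫ η in a..s, B₁ ζ θ η * w θ η)
          + ∫ θ in s..ζ, ∫ η in s..θ, B₁ ζ θ η * w θ η :=
      calc (∫ θ in s..ζ, ∫ η in a..θ, B₁ ζ θ η * w θ η)
          = ∫ θ in s..ζ, ((∫ η in a..s, B₁ ζ θ η * w θ η)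
              + ∫ η in s..θ, B₁ ζ θ η * w θ η) :=
            intervalIntegral.integral_congr fun θ _ => splitI _ (by fun_prop) _ _ _
        _ = _ := iadd₂ _ _ (by fun_prop) (by fun_prop) _ _
    have h2 : (∫ θ in ζ..b, ∫ η in a..ζ, B₂ ζ θ η * w θ η)
        = (∫ θ in ζ..b, ∫ η in a..s, B₂ ζ θ η * w θ η)
          + ∫ θ in ζ..b, ∫ η in s..ζ, B₂ ζ θ η * w θ η :=
      calc (∫ θ in ζ..b, ∫ η in a..ζ, B₂ ζ θ η * w θ η)
          = ∫ θ in ζ..b, ((∫ η in a..s, B₂ ζ θ η * w θ η)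
              + ∫ η in s..ζ, B₂ ζ θ η * w θ η) :=
            intervalIntegral.integral_congr fun θ _ => splitI _ (by fun_prop) _ _ _
        _ = _ := iadd₂ _ _ (by fun_prop) (by fun_prop) _ _
    simp only [tensorPI]
    rw [h1, h1b, h2]
    simp only [mul_add, ← intervalIntegral.integral_const_mul, ← mul_assoc]
    ring

  -- integrate the splittings
  have hT1 : (∫ ζ in a..s, Q₁ s ζ * tensorPI a b B₁ B₂ B₃ w ζ)
      = (∫ ζ in a..s, ∫ θ in a..ζ, ∫ η in a..θ, Q₁ s ζ * B₁ ζ θ η * w θ η)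
      + (∫ ζ in a..s, ∫ θ in ζ..s, ∫ η in a..ζ, Q₁ s ζ * B₂ ζ θ η * w θ η)
      + (∫ ζ in a..s, ∫ θ in s..b, ∫ η in a..ζ, Q₁ s ζ * B₂ ζ θ η * w θ η)
      + (∫ ζ in a..s, ∫ θ in ζ..s, ∫ η in ζ..θ, Q₁ s ζ * B₃ ζ θ η * w θ η)
      + (∫ ζ in a..s, ∫ θ in s..b, ∫ η in ζ..s, Q₁ s ζ * B₃ ζ θ η * w θ η)
      + (∫ ζ in a..s, ∫ θ in s..b, ∫ η in s..θ, Q₁ s ζ * B₃ ζ θ η * w θ η) := by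
    simp only [hsplit1]
    exact iadd₆ _ _ _ _ _ _ (by fun_prop) (by fun_prop) (by fun_prop) (by fun_prop)
      (by fun_prop) (by fun_prop) _ _
  have hT2 : (∫ ζ in s..b, Q₂ s ζ * tensorPI a b B₁ B₂ B₃ w ζ)
      = (∫ ζ in s..b, ∫ θ in a..s, ∫ η in a..θ, Q₂ s ζ * B₁ ζ θ η * w θ η)
      + (∫ ζ in s..b, ∫ θ in s..ζ, ∫ η in a..s, Q₂ s ζ * B₁ ζ θ η * w θ η)
      + (∫ ζ in s..b, ∫ θ in s..ζ, ∫ η in s..θ, Q₂ s ζ * B₁ ζ θ η * w θ η)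
      + (∫ ζ in s..b, ∫ θ in ζ..b, ∫ η in a..s, Q₂ s ζ * B₂ ζ θ η * w θ η)
      + (∫ ζ in s..b, ∫ θ in ζ..b, ∫ η in s..ζ, Q₂ s ζ * B₂ ζ θ η * w θ η)
      + (∫ ζ in s..b, ∫ θ in ζ..b, ∫ η in ζ..θ, Q₂ s ζ * B₃ ζ θ η * w θ η) := by
    simp only [hsplit2]
    exact iadd₆ _ _ _ _ _ _ (by fun_prop) (by fun_prop) (by fun_prop) (by fun_prop)
      (by fun_prop) (by fun_prop) _ _
  have hT0 : Q₀ s * tensorPI a b B₁ B₂ B₃ w s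
      = (∫ θ in a..s, ∫ η in a..θ, Q₀ s * B₁ s θ η * w θ η)
      + (∫ θ in s..b, ∫ η in a..s, Q₀ s * B₂ s θ η * w θ η)
      + (∫ θ in s..b, ∫ η in s..θ, Q₀ s * B₃ s θ η * w θ η) := by
    simp only [tensorPI, mul_add, ← intervalIntegral.integral_const_mul, ← mul_assoc]
  -- the twelve swap blocks
  have hA1 : (∫ ζ in a..s, ∫ θ in a..ζ, ∫ η in a..θ, Q₁ s ζ * B₁ ζ θ η * w θ η)
      = ∫ θ in a..s, ∫ η in a..θ, ∫ ζ in θ..s, Q₁ s ζ * B₁ ζ θ η * w θ η :=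
    calc (∫ ζ in a..s, ∫ θ in a..ζ, ∫ η in a..θ, Q₁ s ζ * B₁ ζ θ η * w θ η)
        = ∫ θ in a..s, ∫ ζ in θ..s, ∫ η in a..θ, Q₁ s ζ * B₁ ζ θ η * w θ η :=
          triSwap (fun ζ θ => ∫ η in a..θ, Q₁ s ζ * B₁ ζ θ η * w θ η) (by fun_prop) has
      _ = _ := intervalIntegral.integral_congr fun θ hθ => by
          rw [uIcc_of_le has] at hθ
          exact rectSwap (fun ζ η => Q₁ s ζ * B₁ ζ θ η * w θ η) (by fun_prop) hθ.2 hθ.1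
  have hB1 : (∫ ζ in a..s, ∫ θ in ζ..s, ∫ η in a..ζ, Q₁ s ζ * B₂ ζ θ η * w θ η)
      = ∫ θ in a..s, ∫ η in a..θ, ∫ ζ in η..θ, Q₁ s ζ * B₂ ζ θ η * w θ η :=
    calc (∫ ζ in a..s, ∫ θ in ζ..s, ∫ η in a..ζ, Q₁ s ζ * B₂ ζ θ η * w θ η)
        = ∫ θ in a..s, ∫ ζ in a..θ, ∫ η in a..ζ, Q₁ s ζ * B₂ ζ θ η * w θ η :=
          (triSwap (fun θ ζ => ∫ η in a..ζ, Q₁ s ζ * B₂ ζ θ η * w θ η) (by fun_prop) has).symm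
      _ = _ := intervalIntegral.integral_congr fun θ hθ => by
          rw [uIcc_of_le has] at hθ
          exact triSwap (fun ζ η => Q₁ s ζ * B₂ ζ θ η * w θ η) (by fun_prop) hθ.1
  have hB2 : (∫ ζ in a..s, ∫ θ in s..b, ∫ η in a..ζ, Q₁ s ζ * B₂ ζ θ η * w θ η)
      = ∫ θ in s..b, ∫ η in a..s, ∫ ζ in η..s, Q₁ s ζ * B₂ ζ θ η * w θ η :=
    calc (∫ ζ in a..s, ∫ θ in s..b, ∫ η in a..ζ, Q₁ s ζ * B₂ ζ θ η * w θ η)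
        = ∫ θ in s..b, ∫ ζ in a..s, ∫ η in a..ζ, Q₁ s ζ * B₂ ζ θ η * w θ η :=
          rectSwap (fun ζ θ => ∫ η in a..ζ, Q₁ s ζ * B₂ ζ θ η * w θ η) (by fun_prop) has hsb
      _ = _ := intervalIntegral.integral_congr fun θ _ =>
          triSwap (fun ζ η => Q₁ s ζ * B₂ ζ θ η * w θ η) (by fun_prop) has
  have hC1 : (∫ ζ in a..s, ∫ θ in ζ..s, ∫ η in ζ..θ, Q₁ s ζ * B₃ ζ θ η * w θ η)
      = ∫ θ in a..s, ∫ η in a..θ, ∫ ζ in a..η, Q₁ s ζ * B₃ ζ θ η * w θ η :=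
    calc (∫ ζ in a..s, ∫ θ in ζ..s, ∫ η in ζ..θ, Q₁ s ζ * B₃ ζ θ η * w θ η)
        = ∫ θ in a..s, ∫ ζ in a..θ, ∫ η in ζ..θ, Q₁ s ζ * B₃ ζ θ η * w θ η :=
          (triSwap (fun θ ζ => ∫ η in ζ..θ, Q₁ s ζ * B₃ ζ θ η * w θ η) (by fun_prop) has).symm
      _ = _ := intervalIntegral.integral_congr fun θ hθ => by
          rw [uIcc_of_le has] at hθ
          exact (triSwap (fun η ζ => Q₁ s ζ * B₃ ζ θ η * w θ η) (by fun_prop) hθ.1).symm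
  have hC2a : (∫ ζ in a..s, ∫ θ in s..b, ∫ η in ζ..s, Q₁ s ζ * B₃ ζ θ η * w θ η)
      = ∫ θ in s..b, ∫ η in a..s, ∫ ζ in a..η, Q₁ s ζ * B₃ ζ θ η * w θ η :=
    calc (∫ ζ in a..s, ∫ θ in s..b, ∫ η in ζ..s, Q₁ s ζ * B₃ ζ θ η * w θ η)
        = ∫ θ in s..b, ∫ ζ in a..s, ∫ η in ζ..s, Q₁ s ζ * B₃ ζ θ η * w θ η :=
          rectSwap (fun ζ θ => ∫ η in ζ..s, Q₁ s ζ * B₃ ζ θ η * w θ η) (by fun_prop) has hsb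
      _ = _ := intervalIntegral.integral_congr fun θ _ =>
          (triSwap (fun η ζ => Q₁ s ζ * B₃ ζ θ η * w θ η) (by fun_prop) has).symm
  have hC2b : (∫ ζ in a..s, ∫ θ in s..b, ∫ η in s..θ, Q₁ s ζ * B₃ ζ θ η * w θ η)
      = ∫ θ in s..b, ∫ η in s..θ, ∫ ζ in a..s, Q₁ s ζ * B₃ ζ θ η * w θ η :=
    calc (∫ ζ in a..s, ∫ θ in s..b, ∫ η in s..θ, Q₁ s ζ * B₃ ζ θ η * w θ η)
        = ∫ θ in s..b, ∫ ζ in a..s, ∫ η in s..θ, Q₁ s ζ * B₃ ζ θ η * w θ η :=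
          rectSwap (fun ζ θ => ∫ η in s..θ, Q₁ s ζ * B₃ ζ θ η * w θ η) (by fun_prop) has hsb
      _ = _ := intervalIntegral.integral_congr fun θ hθ => by
          rw [uIcc_of_le hsb] at hθ
          exact rectSwap (fun ζ η => Q₁ s ζ * B₃ ζ θ η * w θ η) (by fun_prop) has hθ.1
  have hD1 : (∫ ζ in s..b, ∫ θ in a..s, ∫ η in a..θ, Q₂ s ζ * B₁ ζ θ η * w θ η)
      = ∫ θ in a..s, ∫ η in a..θ, ∫ ζ in s..b, Q₂ s ζ * B₁ ζ θ η * w θ η :=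
    calc (∫ ζ in s..b, ∫ θ in a..s, ∫ η in a..θ, Q₂ s ζ * B₁ ζ θ η * w θ η)
        = ∫ θ in a..s, ∫ ζ in s..b, ∫ η in a..θ, Q₂ s ζ * B₁ ζ θ η * w θ η :=
          rectSwap (fun ζ θ => ∫ η in a..θ, Q₂ s ζ * B₁ ζ θ η * w θ η) (by fun_prop) hsb has
      _ = _ := intervalIntegral.integral_congr fun θ hθ => by
          rw [uIcc_of_le has] at hθ
          exact rectSwap (fun ζ η => Q₂ s ζ * B₁ ζ θ η * w θ η) (by fun_prop) hsb hθ.1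
  have hD2a : (∫ ζ in s..b, ∫ θ in s..ζ, ∫ η in a..s, Q₂ s ζ * B₁ ζ θ η * w θ η)
      = ∫ θ in s..b, ∫ η in a..s, ∫ ζ in θ..b, Q₂ s ζ * B₁ ζ θ η * w θ η :=
    calc (∫ ζ in s..b, ∫ θ in s..ζ, ∫ η in a..s, Q₂ s ζ * B₁ ζ θ η * w θ η)
        = ∫ θ in s..b, ∫ ζ in θ..b, ∫ η in a..s, Q₂ s ζ * B₁ ζ θ η * w θ η :=
          triSwap (fun ζ θ => ∫ η in a..s, Q₂ s ζ * B₁ ζ θ η * w θ η) (by fun_prop) hsb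
      _ = _ := intervalIntegral.integral_congr fun θ hθ => by
          rw [uIcc_of_le hsb] at hθ
          exact rectSwap (fun ζ η => Q₂ s ζ * B₁ ζ θ η * w θ η) (by fun_prop) hθ.2 has
  have hD2b : (∫ ζ in s..b, ∫ θ in s..ζ, ∫ η in s..θ, Q₂ s ζ * B₁ ζ θ η * w θ η)
      = ∫ θ in s..b, ∫ η in s..θ, ∫ ζ in θ..b, Q₂ s ζ * B₁ ζ θ η * w θ η :=
    calc (∫ ζ in s..b, ∫ θ in s..ζ, ∫ η in s..θ, Q₂ s ζ * B₁ ζ θ η * w θ η)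
        = ∫ θ in s..b, ∫ ζ in θ..b, ∫ η in s..θ, Q₂ s ζ * B₁ ζ θ η * w θ η :=
          triSwap (fun ζ θ => ∫ η in s..θ, Q₂ s ζ * B₁ ζ θ η * w θ η) (by fun_prop) hsb
      _ = _ := intervalIntegral.integral_congr fun θ hθ => by
          rw [uIcc_of_le hsb] at hθ
          exact rectSwap (fun ζ η => Q₂ s ζ * B₁ ζ θ η * w θ η) (by fun_prop) hθ.2 hθ.1
  have hE1 : (∫ ζ in s..b, ∫ θ in ζ..b, ∫ η in a..s, Q₂ s ζ * B₂ ζ θ η * w θ η)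
      = ∫ θ in s..b, ∫ η in a..s, ∫ ζ in s..θ, Q₂ s ζ * B₂ ζ θ η * w θ η :=
    calc (∫ ζ in s..b, ∫ θ in ζ..b, ∫ η in a..s, Q₂ s ζ * B₂ ζ θ η * w θ η)
        = ∫ θ in s..b, ∫ ζ in s..θ, ∫ η in a..s, Q₂ s ζ * B₂ ζ θ η * w θ η :=
          (triSwap (fun θ ζ => ∫ η in a..s, Q₂ s ζ * B₂ ζ θ η * w θ η) (by fun_prop) hsb).symm
      _ = _ := intervalIntegral.integral_congr fun θ hθ => by
          rw [uIcc_of_le hsb] at hθ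
          exact rectSwap (fun ζ η => Q₂ s ζ * B₂ ζ θ η * w θ η) (by fun_prop) hθ.1 has
  have hE2 : (∫ ζ in s..b, ∫ θ in ζ..b, ∫ η in s..ζ, Q₂ s ζ * B₂ ζ θ η * w θ η)
      = ∫ θ in s..b, ∫ η in s..θ, ∫ ζ in η..θ, Q₂ s ζ * B₂ ζ θ η * w θ η :=
    calc (∫ ζ in s..b, ∫ θ in ζ..b, ∫ η in s..ζ, Q₂ s ζ * B₂ ζ θ η * w θ η)
        = ∫ θ in s..b, ∫ ζ in s..θ, ∫ η in s..ζ, Q₂ s ζ * B₂ ζ θ η * w θ η :=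
          (triSwap (fun θ ζ => ∫ η in s..ζ, Q₂ s ζ * B₂ ζ θ η * w θ η) (by fun_prop) hsb).symm
      _ = _ := intervalIntegral.integral_congr fun θ hθ => by
          rw [uIcc_of_le hsb] at hθ
          exact triSwap (fun ζ η => Q₂ s ζ * B₂ ζ θ η * w θ η) (by fun_prop) hθ.1
  have hF : (∫ ζ in s..b, ∫ θ in ζ..b, ∫ η in ζ..θ, Q₂ s ζ * B₃ ζ θ η * w θ η)
      = ∫ θ in s..b, ∫ η in s..θ, ∫ ζ in s..η, Q₂ s ζ * B₃ ζ θ η * w θ η :=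
    calc (∫ ζ in s..b, ∫ θ in ζ..b, ∫ η in ζ..θ, Q₂ s ζ * B₃ ζ θ η * w θ η)
        = ∫ θ in s..b, ∫ ζ in s..θ, ∫ η in ζ..θ, Q₂ s ζ * B₃ ζ θ η * w θ η :=
          (triSwap (fun θ ζ => ∫ η in ζ..θ, Q₂ s ζ * B₃ ζ θ η * w θ η) (by fun_prop) hsb).symm
      _ = _ := intervalIntegral.integral_congr fun θ hθ => by
          rw [uIcc_of_le hsb] at hθ
          exact (triSwap (fun η ζ => Q₂ s ζ * B₃ ζ θ η * w θ η) (by fun_prop) hθ.1).symm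

  -- expansion of the three regions of the right-hand side
  have hreg1 : (∫ θ in a..s, ∫ η in a..θ,
        (Q₀ s * B₁ s θ η + (∫ ζ in a..η, Q₁ s ζ * B₃ ζ θ η)
          + (∫ ζ in η..θ, Q₁ s ζ * B₂ ζ θ η) + (∫ ζ in θ..s, Q₁ s ζ * B₁ ζ θ η)
          + ∫ ζ in s..b, Q₂ s ζ * B₁ ζ θ η) * w θ η)
      = (∫ θ in a..s, ∫ η in a..θ, Q₀ s * B₁ s θ η * w θ η)
      + (∫ θ in a..s, ∫ η in a..θ, ∫ ζ in a..η, Q₁ s ζ * B₃ ζ θ η * w θ η)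
      + (∫ θ in a..s, ∫ η in a..θ, ∫ ζ in η..θ, Q₁ s ζ * B₂ ζ θ η * w θ η)
      + (∫ θ in a..s, ∫ η in a..θ, ∫ ζ in θ..s, Q₁ s ζ * B₁ ζ θ η * w θ η)
      + (∫ θ in a..s, ∫ η in a..θ, ∫ ζ in s..b, Q₂ s ζ * B₁ ζ θ η * w θ η) := by
    have hpt : ∀ θ, (∫ η in a..θ,
          (Q₀ s * B₁ s θ η + (∫ ζ in a..η, Q₁ s ζ * B₃ ζ θ η)
            + (∫ ζ in η..θ, Q₁ s ζ * B₂ ζ θ η) + (∫ ζ in θ..s, Q₁ s ζ * B₁ ζ θ η)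
            + ∫ ζ in s..b, Q₂ s ζ * B₁ ζ θ η) * w θ η)
        = (∫ η in a..θ, Q₀ s * B₁ s θ η * w θ η)
        + (∫ η in a..θ, (∫ ζ in a..η, Q₁ s ζ * B₃ ζ θ η) * w θ η)
        + (∫ η in a..θ, (∫ ζ in η..θ, Q₁ s ζ * B₂ ζ θ η) * w θ η)
        + (∫ η in a..θ, (∫ ζ in θ..s, Q₁ s ζ * B₁ ζ θ η) * w θ η)
        + (∫ η in a..θ, (∫ ζ in s..b, Q₂ s ζ * B₁ ζ θ η) * w θ η) := by
      intro θ
      simp only [add_mul]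
      exact iadd₅ _ _ _ _ _ (by fun_prop) (by fun_prop) (by fun_prop) (by fun_prop)
        (by fun_prop) _ _
    simp only [hpt]
    refine (iadd₅ _ _ _ _ _ (by fun_prop) (by fun_prop) (by fun_prop) (by fun_prop)
      (by fun_prop) _ _).trans ?_
    simp only [← intervalIntegral.integral_mul_const]
  have hreg2 : (∫ θ in s..b, ∫ η in a..s,
        (Q₀ s * B₂ s θ η + (∫ ζ in a..η, Q₁ s ζ * B₃ ζ θ η)
          + (∫ ζ in η..s, Q₁ s ζ * B₂ ζ θ η) + (∫ ζ in s..θ, Q₂ s ζ * B₂ ζ θ η)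
          + ∫ ζ in θ..b, Q₂ s ζ * B₁ ζ θ η) * w θ η)
      = (∫ θ in s..b, ∫ η in a..s, Q₀ s * B₂ s θ η * w θ η)
      + (∫ θ in s..b, ∫ η in a..s, ∫ ζ in a..η, Q₁ s ζ * B₃ ζ θ η * w θ η)
      + (∫ θ in s..b, ∫ η in a..s, ∫ ζ in η..s, Q₁ s ζ * B₂ ζ θ η * w θ η)
      + (∫ θ in s..b, ∫ η in a..s, ∫ ζ in s..θ, Q₂ s ζ * B₂ ζ θ η * w θ η)
      + (∫ θ in s..b, ∫ η in a..s, ∫ ζ in θ..b, Q₂ s ζ * B₁ ζ θ η * w θ η) := by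
    have hpt : ∀ θ, (∫ η in a..s,
          (Q₀ s * B₂ s θ η + (∫ ζ in a..η, Q₁ s ζ * B₃ ζ θ η)
            + (∫ ζ in η..s, Q₁ s ζ * B₂ ζ θ η) + (∫ ζ in s..θ, Q₂ s ζ * B₂ ζ θ η)
            + ∫ ζ in θ..b, Q₂ s ζ * B₁ ζ θ η) * w θ η)
        = (∫ η in a..s, Q₀ s * B₂ s θ η * w θ η)
        + (∫ η in a..s, (∫ ζ in a..η, Q₁ s ζ * B₃ ζ θ η) * w θ η)
        + (∫ η in a..s, (∫ ζ in η..s, Q₁ s ζ * B₂ ζ θ η) * w θ η)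
        + (∫ η in a..s, (∫ ζ in s..θ, Q₂ s ζ * B₂ ζ θ η) * w θ η)
        + (∫ η in a..s, (∫ ζ in θ..b, Q₂ s ζ * B₁ ζ θ η) * w θ η) := by
      intro θ
      simp only [add_mul]
      exact iadd₅ _ _ _ _ _ (by fun_prop) (by fun_prop) (by fun_prop) (by fun_prop)
        (by fun_prop) _ _
    simp only [hpt]
    refine (iadd₅ _ _ _ _ _ (by fun_prop) (by fun_prop) (by fun_prop) (by fun_prop)
      (by fun_prop) _ _).trans ?_
    simp only [← intervalIntegral.integral_mul_const]
  have hreg3 : (∫ θ in s..b, ∫ η in s..θ,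
        (Q₀ s * B₃ s θ η + (∫ ζ in a..s, Q₁ s ζ * B₃ ζ θ η)
          + (∫ ζ in s..η, Q₂ s ζ * B₃ ζ θ η) + (∫ ζ in η..θ, Q₂ s ζ * B₂ ζ θ η)
          + ∫ ζ in θ..b, Q₂ s ζ * B₁ ζ θ η) * w θ η)
      = (∫ θ in s..b, ∫ η in s..θ, Q₀ s * B₃ s θ η * w θ η)
      + (∫ θ in s..b, ∫ η in s..θ, ∫ ζ in a..s, Q₁ s ζ * B₃ ζ θ η * w θ η)
      + (∫ θ in s..b, ∫ η in s..θ, ∫ ζ in s..η, Q₂ s ζ * B₃ ζ θ η * w θ η)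
      + (∫ θ in s..b, ∫ η in s..θ, ∫ ζ in η..θ, Q₂ s ζ * B₂ ζ θ η * w θ η)
      + (∫ θ in s..b, ∫ η in s..θ, ∫ ζ in θ..b, Q₂ s ζ * B₁ ζ θ η * w θ η) := by
    have hpt : ∀ θ, (∫ η in s..θ,
          (Q₀ s * B₃ s θ η + (∫ ζ in a..s, Q₁ s ζ * B₃ ζ θ η)
            + (∫ ζ in s..η, Q₂ s ζ * B₃ ζ θ η) + (∫ ζ in η..θ, Q₂ s ζ * B₂ ζ θ η)
            + ∫ ζ in θ..b, Q₂ s ζ * B₁ ζ θ η) * w θ η)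
        = (∫ η in s..θ, Q₀ s * B₃ s θ η * w θ η)
        + (∫ η in s..θ, (∫ ζ in a..s, Q₁ s ζ * B₃ ζ θ η) * w θ η)
        + (∫ η in s..θ, (∫ ζ in s..η, Q₂ s ζ * B₃ ζ θ η) * w θ η)
        + (∫ η in s..θ, (∫ ζ in η..θ, Q₂ s ζ * B₂ ζ θ η) * w θ η)
        + (∫ η in s..θ, (∫ ζ in θ..b, Q₂ s ζ * B₁ ζ θ η) * w θ η) := by
      intro θ
      simp only [add_mul]
      exact iadd₅ _ _ _ _ _ (by fun_prop) (by fun_prop) (by fun_prop) (by fun_prop)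
        (by fun_prop) _ _
    simp only [hpt]
    refine (iadd₅ _ _ _ _ _ (by fun_prop) (by fun_prop) (by fun_prop) (by fun_prop)
      (by fun_prop) _ _).trans ?_
    simp only [← intervalIntegral.integral_mul_const]
  -- assemble
  rw [hT0, hT1, hT2, hA1, hB1, hB2, hC1, hC2a, hC2b, hD1, hD2a, hD2b, hE1, hE2, hF]
  simp only [tensorPI]
  rw [hreg1, hreg2, hreg3]
  ring

lemma exists_cont_ext {X : Type*} [TopologicalSpace X] [NormalSpace X] {s : Set X}
    (hs : IsClosed s) {f : X → ℝ} (hf : ContinuousOn f s) :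
    ∃ g : X → ℝ, Continuous g ∧ ∀ x ∈ s, g x = f x := by
  obtain ⟨g, hg⟩ := ContinuousMap.exists_restrict_eq hs ⟨s.restrict f, hf.restrict⟩
  refine ⟨g, g.continuous, fun x hx => ?_⟩
  have := congrFun (congrArg DFunLike.coe hg) ⟨x, hx⟩
  exact this


theorem comp_3PI_tensorPI (a b : ℝ) (hab : a < b)
    (Q₀ : ℝ → ℝ) (Q₁ Q₂ : ℝ → ℝ → ℝ) (B₁ B₂ B₃ : ℝ → ℝ → ℝ → ℝ)
    (w : ℝ → ℝ → ℝ)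
    (hQ₀ : ContinuousOn Q₀ (Set.Icc a b))
    (hQ₁ : ContinuousOn (fun p : ℝ × ℝ => Q₁ p.1 p.2) (Set.Icc a b ×ˢ Set.Icc a b))
    (hQ₂ : ContinuousOn (fun p : ℝ × ℝ => Q₂ p.1 p.2) (Set.Icc a b ×ˢ Set.Icc a b))
    (hB₁ : ContinuousOn (fun p : ℝ × ℝ × ℝ => B₁ p.1 p.2.1 p.2.2)
      (Set.Icc a b ×ˢ Set.Icc a b ×ˢ Set.Icc a b))
    (hB₂ : ContinuousOn (fun p : ℝ × ℝ × ℝ => B₂ p.1 p.2.1 p.2.2)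
      (Set.Icc a b ×ˢ Set.Icc a b ×ˢ Set.Icc a b))
    (hB₃ : ContinuousOn (fun p : ℝ × ℝ × ℝ => B₃ p.1 p.2.1 p.2.2)
      (Set.Icc a b ×ˢ Set.Icc a b ×ˢ Set.Icc a b))
    (hw : ContinuousOn (fun p : ℝ × ℝ => w p.1 p.2) (Set.Icc a b ×ˢ Set.Icc a b))
    (s : ℝ) (hs : s ∈ Set.Icc a b) :
    Q₀ s * tensorPI a b B₁ B₂ B₃ w s
      + (∫ ζ in a..s, Q₁ s ζ * tensorPI a b B₁ B₂ B₃ w ζ)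
      + (∫ ζ in s..b, Q₂ s ζ * tensorPI a b B₁ B₂ B₃ w ζ)
    = tensorPI a b
        (fun s θ η => Q₀ s * B₁ s θ η
          + (∫ ζ in a..η, Q₁ s ζ * B₃ ζ θ η)
          + (∫ ζ in η..θ, Q₁ s ζ * B₂ ζ θ η)
          + (∫ ζ in θ..s, Q₁ s ζ * B₁ ζ θ η)
          + ∫ ζ in s..b, Q₂ s ζ * B₁ ζ θ η)
        (fun s θ η => Q₀ s * B₂ s θ η
          + (∫ ζ in a..η, Q₁ s ζ * B₃ ζ θ η)
          + (∫ ζ in η..s, Q₁ s ζ * B₂ ζ θ η)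
          + (∫ ζ in s..θ, Q₂ s ζ * B₂ ζ θ η)
          + ∫ ζ in θ..b, Q₂ s ζ * B₁ ζ θ η)
        (fun s θ η => Q₀ s * B₃ s θ η
          + (∫ ζ in a..s, Q₁ s ζ * B₃ ζ θ η)
          + (∫ ζ in s..η, Q₂ s ζ * B₃ ζ θ η)
          + (∫ ζ in η..θ, Q₂ s ζ * B₂ ζ θ η)
          + ∫ ζ in θ..b, Q₂ s ζ * B₁ ζ θ η)
        w s := by
  have hab' : a ≤ b := hab.le
  have has : a ≤ s := hs.1
  have hsb : s ≤ b := hs.2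
  have haI : a ∈ Set.Icc a b := Set.left_mem_Icc.mpr hab'
  have hbI : b ∈ Set.Icc a b := Set.right_mem_Icc.mpr hab'
  have hsub : ∀ {x y : ℝ}, x ∈ Set.Icc a b → y ∈ Set.Icc a b →
      Set.uIcc x y ⊆ Set.Icc a b := fun hx hy => Set.uIcc_subset_Icc hx hy
  obtain ⟨q₀, hq₀c, hq₀e⟩ := exists_cont_ext isClosed_Icc hQ₀
  obtain ⟨q₁, hq₁c, hq₁e⟩ := exists_cont_ext (isClosed_Icc.prod isClosed_Icc) hQ₁
  obtain ⟨q₂, hq₂c, hq₂e⟩ := exists_cont_ext (isClosed_Icc.prod isClosed_Icc) hQ₂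
  obtain ⟨k₁, hk₁c, hk₁e⟩ :=
    exists_cont_ext (isClosed_Icc.prod (isClosed_Icc.prod isClosed_Icc)) hB₁
  obtain ⟨k₂, hk₂c, hk₂e⟩ :=
    exists_cont_ext (isClosed_Icc.prod (isClosed_Icc.prod isClosed_Icc)) hB₂
  obtain ⟨k₃, hk₃c, hk₃e⟩ :=
    exists_cont_ext (isClosed_Icc.prod (isClosed_Icc.prod isClosed_Icc)) hB₃
  obtain ⟨v, hvc, hve⟩ := exists_cont_ext (isClosed_Icc.prod isClosed_Icc) hw
  set Q₁' : ℝ → ℝ → ℝ := fun x y => q₁ (x, y) with hQ₁'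
  set Q₂' : ℝ → ℝ → ℝ := fun x y => q₂ (x, y) with hQ₂'
  set B₁' : ℝ → ℝ → ℝ → ℝ := fun x y z => k₁ (x, y, z) with hB₁'
  set B₂' : ℝ → ℝ → ℝ → ℝ := fun x y z => k₂ (x, y, z) with hB₂'
  set B₃' : ℝ → ℝ → ℝ → ℝ := fun x y z => k₃ (x, y, z) with hB₃'
  set W : ℝ → ℝ → ℝ := fun x y => v (x, y) with hW
  have eQ₀ : ∀ x ∈ Set.Icc a b, Q₀ x = q₀ x := fun x hx => (hq₀e x hx).symm
  have eQ₁ : ∀ x y, x ∈ Set.Icc a b → y ∈ Set.Icc a b → Q₁ x y = Q₁' x y :=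
    fun x y hx hy => (hq₁e (x, y) ⟨hx, hy⟩).symm
  have eQ₂ : ∀ x y, x ∈ Set.Icc a b → y ∈ Set.Icc a b → Q₂ x y = Q₂' x y :=
    fun x y hx hy => (hq₂e (x, y) ⟨hx, hy⟩).symm
  have eB₁ : ∀ x y z, x ∈ Set.Icc a b → y ∈ Set.Icc a b → z ∈ Set.Icc a b →
      B₁ x y z = B₁' x y z := fun x y z hx hy hz => (hk₁e (x, y, z) ⟨hx, hy, hz⟩).symm
  have eB₂ : ∀ x y z, x ∈ Set.Icc a b → y ∈ Set.Icc a b → z ∈ Set.Icc a b →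
      B₂ x y z = B₂' x y z := fun x y z hx hy hz => (hk₂e (x, y, z) ⟨hx, hy, hz⟩).symm
  have eB₃ : ∀ x y z, x ∈ Set.Icc a b → y ∈ Set.Icc a b → z ∈ Set.Icc a b →
      B₃ x y z = B₃' x y z := fun x y z hx hy hz => (hk₃e (x, y, z) ⟨hx, hy, hz⟩).symm
  have eW : ∀ x y, x ∈ Set.Icc a b → y ∈ Set.Icc a b → w x y = W x y :=
    fun x y hx hy => (hve (x, y) ⟨hx, hy⟩).symm
  have htp : ∀ ζ ∈ Set.Icc a b, tensorPI a b B₁ B₂ B₃ w ζ = tensorPI a b B₁' B₂' B₃' W ζ := by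
    intro ζ hζ
    simp only [tensorPI]
    congr 1
    · congr 1
      · refine intervalIntegral.integral_congr fun θ hθ => ?_
        have hθ' : θ ∈ Set.Icc a b := hsub haI hζ hθ
        refine intervalIntegral.integral_congr fun η hη => ?_
        have hη' : η ∈ Set.Icc a b := hsub haI hθ' hη
        rw [eB₁ ζ θ η hζ hθ' hη', eW θ η hθ' hη']
      · refine intervalIntegral.integral_congr fun θ hθ => ?_
        have hθ' : θ ∈ Set.Icc a b := hsub hζ hbI hθ
        refine intervalIntegral.integral_congr fun η hη => ?_
        have hη' : η ∈ Set.Icc a b := hsub haI hζ hη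
        rw [eB₂ ζ θ η hζ hθ' hη', eW θ η hθ' hη']
    · refine intervalIntegral.integral_congr fun θ hθ => ?_
      have hθ' : θ ∈ Set.Icc a b := hsub hζ hbI hθ
      refine intervalIntegral.integral_congr fun η hη => ?_
      have hη' : η ∈ Set.Icc a b := hsub hζ hθ' hη
      rw [eB₃ ζ θ η hζ hθ' hη', eW θ η hθ' hη']
  have hk := key a b q₀ Q₁' Q₂' B₁' B₂' B₃' W hq₀c hq₁c hq₂c hk₁c hk₂c hk₃c hvc s has hsb
  have hL : Q₀ s * tensorPI a b B₁ B₂ B₃ w s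
      + (∫ ζ in a..s, Q₁ s ζ * tensorPI a b B₁ B₂ B₃ w ζ)
      + (∫ ζ in s..b, Q₂ s ζ * tensorPI a b B₁ B₂ B₃ w ζ)
      = q₀ s * tensorPI a b B₁' B₂' B₃' W s
      + (∫ ζ in a..s, Q₁' s ζ * tensorPI a b B₁' B₂' B₃' W ζ)
      + (∫ ζ in s..b, Q₂' s ζ * tensorPI a b B₁' B₂' B₃' W ζ) := by
    rw [eQ₀ s hs, htp s hs]
    congr 1
    · congr 1
      exact intervalIntegral.integral_congr fun ζ hζ => by
        have hζ' : ζ ∈ Set.Icc a b := hsub haI hs hζ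
        rw [eQ₁ s ζ hs hζ', htp ζ hζ']
    · exact intervalIntegral.integral_congr fun ζ hζ => by
        have hζ' : ζ ∈ Set.Icc a b := hsub hs hbI hζ
        rw [eQ₂ s ζ hs hζ', htp ζ hζ']
  rw [hL, hk]
  simp only [tensorPI]
  congr 1
  · congr 1
    · refine intervalIntegral.integral_congr fun θ hθ => ?_
      have hθ' : θ ∈ Set.Icc a b := hsub haI hs hθ
      refine intervalIntegral.integral_congr fun η hη => ?_
      have hη' : η ∈ Set.Icc a b := hsub haI hθ' hη
      rw [eQ₀ s hs, eB₁ s θ η hs hθ' hη', eW θ η hθ' hη',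
        show (∫ ζ in a..η, Q₁ s ζ * B₃ ζ θ η) = ∫ ζ in a..η, Q₁' s ζ * B₃' ζ θ η from
          intervalIntegral.integral_congr fun ζ hζ => by
            have hζ' : ζ ∈ Set.Icc a b := hsub haI hη' hζ
            rw [eQ₁ s ζ hs hζ', eB₃ ζ θ η hζ' hθ' hη'],
        show (∫ ζ in η..θ, Q₁ s ζ * B₂ ζ θ η) = ∫ ζ in η..θ, Q₁' s ζ * B₂' ζ θ η from
          intervalIntegral.integral_congr fun ζ hζ => by
            have hζ' : ζ ∈ Set.Icc a b := hsub hη' hθ' hζ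
            rw [eQ₁ s ζ hs hζ', eB₂ ζ θ η hζ' hθ' hη'],
        show (∫ ζ in θ..s, Q₁ s ζ * B₁ ζ θ η) = ∫ ζ in θ..s, Q₁' s ζ * B₁' ζ θ η from
          intervalIntegral.integral_congr fun ζ hζ => by
            have hζ' : ζ ∈ Set.Icc a b := hsub hθ' hs hζ
            rw [eQ₁ s ζ hs hζ', eB₁ ζ θ η hζ' hθ' hη'],
        show (∫ ζ in s..b, Q₂ s ζ * B₁ ζ θ η) = ∫ ζ in s..b, Q₂' s ζ * B₁' ζ θ η from
          intervalIntegral.integral_congr fun ζ hζ => by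
            have hζ' : ζ ∈ Set.Icc a b := hsub hs hbI hζ
            rw [eQ₂ s ζ hs hζ', eB₁ ζ θ η hζ' hθ' hη']]
    · refine intervalIntegral.integral_congr fun θ hθ => ?_
      have hθ' : θ ∈ Set.Icc a b := hsub hs hbI hθ
      refine intervalIntegral.integral_congr fun η hη => ?_
      have hη' : η ∈ Set.Icc a b := hsub haI hs hη
      rw [eQ₀ s hs, eB₂ s θ η hs hθ' hη', eW θ η hθ' hη',
        show (∫ ζ in a..η, Q₁ s ζ * B₃ ζ θ η) = ∫ ζ in a..η, Q₁' s ζ * B₃' ζ θ η from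
          intervalIntegral.integral_congr fun ζ hζ => by
            have hζ' : ζ ∈ Set.Icc a b := hsub haI hη' hζ
            rw [eQ₁ s ζ hs hζ', eB₃ ζ θ η hζ' hθ' hη'],
        show (∫ ζ in η..s, Q₁ s ζ * B₂ ζ θ η) = ∫ ζ in η..s, Q₁' s ζ * B₂' ζ θ η from
          intervalIntegral.integral_congr fun ζ hζ => by
            have hζ' : ζ ∈ Set.Icc a b := hsub hη' hs hζ
            rw [eQ₁ s ζ hs hζ', eB₂ ζ θ η hζ' hθ' hη'],
        show (∫ ζ in s..θ, Q₂ s ζ * B₂ ζ θ η) = ∫ ζ in s..θ, Q₂' s ζ * B₂' ζ θ η from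
          intervalIntegral.integral_congr fun ζ hζ => by
            have hζ' : ζ ∈ Set.Icc a b := hsub hs hθ' hζ
            rw [eQ₂ s ζ hs hζ', eB₂ ζ θ η hζ' hθ' hη'],
        show (∫ ζ in θ..b, Q₂ s ζ * B₁ ζ θ η) = ∫ ζ in θ..b, Q₂' s ζ * B₁' ζ θ η from
          intervalIntegral.integral_congr fun ζ hζ => by
            have hζ' : ζ ∈ Set.Icc a b := hsub hθ' hbI hζ
            rw [eQ₂ s ζ hs hζ', eB₁ ζ θ η hζ' hθ' hη']]
  · refine intervalIntegral.integral_congr fun θ hθ => ?_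
    have hθ' : θ ∈ Set.Icc a b := hsub hs hbI hθ
    refine intervalIntegral.integral_congr fun η hη => ?_
    have hη' : η ∈ Set.Icc a b := hsub hs hθ' hη
    rw [eQ₀ s hs, eB₃ s θ η hs hθ' hη', eW θ η hθ' hη',
      show (∫ ζ in a..s, Q₁ s ζ * B₃ ζ θ η) = ∫ ζ in a..s, Q₁' s ζ * B₃' ζ θ η from
        intervalIntegral.integral_congr fun ζ hζ => by
          have hζ' : ζ ∈ Set.Icc a b := hsub haI hs hζ
          rw [eQ₁ s ζ hs hζ', eB₃ ζ θ η hζ' hθ' hη'],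
      show (∫ ζ in s..η, Q₂ s ζ * B₃ ζ θ η) = ∫ ζ in s..η, Q₂' s ζ * B₃' ζ θ η from
        intervalIntegral.integral_congr fun ζ hζ => by
          have hζ' : ζ ∈ Set.Icc a b := hsub hs hη' hζ
          rw [eQ₂ s ζ hs hζ', eB₃ ζ θ η hζ' hθ' hη'],
      show (∫ ζ in η..θ, Q₂ s ζ * B₂ ζ θ η) = ∫ ζ in η..θ, Q₂' s ζ * B₂' ζ θ η from
        intervalIntegral.integral_congr fun ζ hζ => by
          have hζ' : ζ ∈ Set.Icc a b := hsub hη' hθ' hζ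
          rw [eQ₂ s ζ hs hζ', eB₂ ζ θ η hζ' hθ' hη'],
      show (∫ ζ in θ..b, Q₂ s ζ * B₁ ζ θ η) = ∫ ζ in θ..b, Q₂' s ζ * B₁' ζ θ η from
        intervalIntegral.integral_congr fun ζ hζ => by
          have hζ' : ζ ∈ Set.Icc a b := hsub hθ' hbI hζ
          rw [eQ₂ s ζ hs hζ', eB₁ ζ θ η hζ' hθ' hη']]
end

section
/- Let u : ℝ → ℝ be three times continuously differentiable on [0,1] with u(0) = 0, u(1) = 0, and u'(1) = 0. Then for every s ∈ [0,1], both of the following hold: (i) ∫_0^1 (1/2)(s−1)²θ²·u'''(θ) dθ − ∫_s^1 (1/2)(s−θ)²·u'''(θ) dθ = u(s); (ii) ∫_0^1 (s−1)θ²·u'''(θ) dθ − ∫_s^1 (s−θ)·u'''(θ) dθ = u'(s). -/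
open MeasureTheory

private lemma ftc_icc (F f : ℝ → ℝ) (a b : ℝ) (hab : a ≤ b)
    (hF : ∀ x ∈ Set.Icc a b, HasDerivWithinAt F (f x) (Set.Icc a b) x)
    (hf : ContinuousOn f (Set.Icc a b)) :
    ∫ x in a..b, f x = F b - F a := by
  apply intervalIntegral.integral_eq_sub_of_hasDeriv_right_of_le hab
  · exact fun x hx => (hF x hx).continuousWithinAt
  · intro x hx
    have hmem : Set.Icc a b ∈ nhds x := Icc_mem_nhds hx.1 hx.2
    exact (((hF x (Set.Ioo_subset_Icc_self hx)).hasDerivAt hmem)).hasDerivWithinAt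
  · exact (hf.mono (by rw [Set.uIcc_of_le hab])).intervalIntegrable

theorem KdV_reconstruction (u u' u'' u''' : ℝ → ℝ)
    (hu' : ∀ x ∈ Set.Icc (0:ℝ) 1, HasDerivWithinAt u (u' x) (Set.Icc 0 1) x)
    (hu'' : ∀ x ∈ Set.Icc (0:ℝ) 1, HasDerivWithinAt u' (u'' x) (Set.Icc 0 1) x)
    (hu''' : ∀ x ∈ Set.Icc (0:ℝ) 1, HasDerivWithinAt u'' (u''' x) (Set.Icc 0 1) x)
    (hcont : ContinuousOn u''' (Set.Icc 0 1))
    (h0 : u 0 = 0) (h1 : u 1 = 0) (h1' : u' 1 = 0) :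
    ∀ s ∈ Set.Icc (0:ℝ) 1,
      ((∫ θ in (0:ℝ)..1, (1/2) * (s - 1) ^ 2 * θ ^ 2 * u''' θ)
          - (∫ θ in s..(1:ℝ), (1/2) * (s - θ) ^ 2 * u''' θ) = u s)
      ∧ ((∫ θ in (0:ℝ)..1, (s - 1) * θ ^ 2 * u''' θ)
          - (∫ θ in s..(1:ℝ), (s - θ) * u''' θ) = u' s) := by
  intro s hs
  obtain ⟨hs0, hs1⟩ := hs
  have hsub : Set.Icc s 1 ⊆ Set.Icc (0:ℝ) 1 := Set.Icc_subset_Icc hs0 le_rfl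
  have hss : s ∈ Set.Icc (0:ℝ) 1 := ⟨hs0, hs1⟩
  have h1s : (1:ℝ) ∈ Set.Icc (0:ℝ) 1 := ⟨zero_le_one, le_rfl⟩
  -- Integral A : ∫ θ in 0..1, θ^2 * u''' θ = u'' 1
  have hA : ∫ θ in (0:ℝ)..1, θ ^ 2 * u''' θ
      = (fun θ => θ ^ 2 * u'' θ - 2 * θ * u' θ + 2 * u θ) 1
        - (fun θ => θ ^ 2 * u'' θ - 2 * θ * u' θ + 2 * u θ) 0 := by
    apply ftc_icc (fun θ => θ ^ 2 * u'' θ - 2 * θ * u' θ + 2 * u θ) _ 0 1 zero_le_one _ (by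
      exact (continuousOn_id.pow 2).mul hcont)
    intro x hx
    have d1 : HasDerivWithinAt (fun θ : ℝ => θ ^ 2 * u'' θ)
        (2 * x * u'' x + x ^ 2 * u''' x) (Set.Icc 0 1) x := by
      have := ((hasDerivAt_pow 2 x).hasDerivWithinAt (s := Set.Icc (0:ℝ) 1)).mul (hu''' x hx)
      exact this.congr_deriv (by ring)
    have d2 : HasDerivWithinAt (fun θ : ℝ => 2 * θ * u' θ)
        (2 * u' x + 2 * x * u'' x) (Set.Icc 0 1) x := by
      have := (((hasDerivAt_id x).const_mul 2).hasDerivWithinAt (s := Set.Icc (0:ℝ) 1)).mul (hu'' x hx)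
      exact this.congr_deriv (by simp only [id_eq]; ring)
    have d3 : HasDerivWithinAt (fun θ : ℝ => 2 * u θ) (2 * u' x) (Set.Icc 0 1) x :=
      (hu' x hx).const_mul 2
    have := (d1.sub d2).add d3
    exact this.congr_deriv (by ring)
  -- Integral B : ∫ θ in s..1, (s-θ) * u''' θ = (s-1) * u'' 1 - u' s
  have hB : ∫ θ in s..(1:ℝ), (s - θ) * u''' θ
      = ((s - 1) * u'' 1 + u' 1) - ((s - s) * u'' s + u' s) := by
    apply ftc_icc (fun θ => (s - θ) * u'' θ + u' θ) _ s 1 hs1 _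
      (((continuousOn_const.sub continuousOn_id).mul hcont).mono hsub)
    intro x hx
    have hx' := hsub hx
    have d1 : HasDerivWithinAt (fun θ : ℝ => (s - θ) * u'' θ)
        (-u'' x + (s - x) * u''' x) (Set.Icc s 1) x := by
      have := (((hasDerivAt_id x).const_sub s).hasDerivWithinAt (s := Set.Icc s 1)).mul
        ((hu''' x hx').mono hsub)
      exact this.congr_deriv (by simp only [id_eq]; ring)
    have := d1.add ((hu'' x hx').mono hsub)
    exact this.congr_deriv (by simp only [Pi.mul_apply, Pi.sub_apply, Pi.add_apply, Pi.pow_apply, Pi.neg_apply, id_eq]; ring)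
  -- Integral C : ∫ θ in s..1, (1/2)(s-θ)^2 u''' θ = ...
  have hC : ∫ θ in s..(1:ℝ), (1/2) * (s - θ) ^ 2 * u''' θ
      = ((1/2) * (s - 1) ^ 2 * u'' 1 + (s - 1) * u' 1 + u 1)
        - ((1/2) * (s - s) ^ 2 * u'' s + (s - s) * u' s + u s) := by
    apply ftc_icc (fun θ => (1/2) * (s - θ) ^ 2 * u'' θ + (s - θ) * u' θ + u θ) _ s 1 hs1 _
      (((continuousOn_const.mul ((continuousOn_const.sub continuousOn_id).pow 2)).mul hcont).mono hsub)
    intro x hx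
    have hx' := hsub hx
    have ds : HasDerivWithinAt (fun θ : ℝ => s - θ) (-1) (Set.Icc s 1) x :=
      ((hasDerivAt_id x).const_sub s).hasDerivWithinAt
    have d1 : HasDerivWithinAt (fun θ : ℝ => (1/2) * (s - θ) ^ 2 * u'' θ)
        (-(s - x) * u'' x + (1/2) * (s - x) ^ 2 * u''' x) (Set.Icc s 1) x := by
      have := (((ds.pow 2).const_mul ((1:ℝ)/2)).mul ((hu''' x hx').mono hsub))
      simp only [Pi.pow_apply, Pi.mul_def, Nat.cast_ofNat] at this
      have h2 : (1/2 * (2 * (s - x) ^ (2-1) * -1)) * u'' x + (1/2) * (s-x)^2 * u''' x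
          = -(s - x) * u'' x + (1/2) * (s - x) ^ 2 * u''' x := by norm_num; ring
      exact (this.congr_deriv h2).congr (fun y _ => by ring) (by ring)
    have d2 : HasDerivWithinAt (fun θ : ℝ => (s - θ) * u' θ)
        (-u' x + (s - x) * u'' x) (Set.Icc s 1) x := by
      have := ds.mul ((hu'' x hx').mono hsub)
      exact this.congr_deriv (by ring)
    have := (d1.add d2).add ((hu' x hx').mono hsub)
    exact this.congr_deriv (by simp only [Pi.mul_apply, Pi.sub_apply, Pi.add_apply, Pi.pow_apply, Pi.neg_apply, id_eq]; ring)
  constructor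
  · have e1 : (∫ θ in (0:ℝ)..1, (1/2) * (s - 1) ^ 2 * θ ^ 2 * u''' θ)
        = (1/2) * (s - 1) ^ 2 * ∫ θ in (0:ℝ)..1, θ ^ 2 * u''' θ := by
      rw [← intervalIntegral.integral_const_mul]
      congr 1; ext θ; ring
    rw [e1, hA, hC]
    simp [h0, h1, h1']
  · have e2 : (∫ θ in (0:ℝ)..1, (s - 1) * θ ^ 2 * u''' θ)
        = (s - 1) * ∫ θ in (0:ℝ)..1, θ ^ 2 * u''' θ := by
      rw [← intervalIntegral.integral_const_mul]
      congr 1; ext θ; ring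
    rw [e2, hA, hB]
    simp [h0, h1, h1']
end
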